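/- arXiv:1810.08824 — 2 statements merged into one kernel-verified Lean document; each statement's English description precedes it below -/
import Mathlib

section
/- Let u : [0, a] → ℂ be continuously differentiable on [0, a] with a > 0, and let 0 < δ ≤ a. Then δ |u(0)|² ≤ ‖u‖²_{L²(0,δ)} + 2δ ‖u‖_{L²(0,δ)} ‖u'‖_{L²(0,δ)}. -/
open Real MeasureTheory intervalIntegral

lemma cs_aux (δ : ℝ) (hδ : 0 ≤ δ) (f g : ℝ → ℝ)
    (hf : ContinuousOn f (Set.Icc 0 δ)) (hg : ContinuousOn g (Set.Icc 0 δ))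
    (hf0 : ∀ x, 0 ≤ f x) (hg0 : ∀ x, 0 ≤ g x) :
    (∫ x in (0:ℝ)..δ, f x * g x) ≤
      Real.sqrt (∫ x in (0:ℝ)..δ, f x ^ 2) * Real.sqrt (∫ x in (0:ℝ)..δ, g x ^ 2) := by
  set μ := volume.restrict (Set.Ioc (0:ℝ) δ) with hμ
  haveI : IsFiniteMeasure μ := ⟨by
    simp only [hμ, Measure.restrict_apply_univ, Real.volume_Ioc]
    exact ENNReal.ofReal_lt_top⟩
  have hmem : ∀ᵐ x ∂μ, x ∈ Set.Ioc (0:ℝ) δ := ae_restrict_mem measurableSet_Ioc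
  have hsub : Set.Ioc (0:ℝ) δ ⊆ Set.Icc 0 δ := Set.Ioc_subset_Icc_self
  obtain ⟨C, hC⟩ := isCompact_Icc.exists_bound_of_continuousOn hf
  obtain ⟨D, hD⟩ := isCompact_Icc.exists_bound_of_continuousOn hg
  have hfm : AEStronglyMeasurable f μ :=
    (hf.mono hsub).aestronglyMeasurable measurableSet_Ioc
  have hgm : AEStronglyMeasurable g μ :=
    (hg.mono hsub).aestronglyMeasurable measurableSet_Ioc
  have hfL : MemLp f (ENNReal.ofReal 2) μ := by
    refine memLp_of_bounded (a := -C) (b := C) ?_ hfm _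
    filter_upwards [hmem] with x hx
    exact abs_le.mp ((Real.norm_eq_abs _ ▸ hC x (hsub hx)))
  have hgL : MemLp g (ENNReal.ofReal 2) μ := by
    refine memLp_of_bounded (a := -D) (b := D) ?_ hgm _
    filter_upwards [hmem] with x hx
    exact abs_le.mp ((Real.norm_eq_abs _ ▸ hD x (hsub hx)))
  have hpq : Real.HolderConjugate 2 2 := Real.holderConjugate_iff.mpr ⟨one_lt_two, by norm_num⟩
  have H := integral_mul_le_Lp_mul_Lq_of_nonneg hpq
    (Filter.Eventually.of_forall hf0) (Filter.Eventually.of_forall hg0) hfL hgL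
  rw [intervalIntegral.integral_of_le hδ, intervalIntegral.integral_of_le hδ,
    intervalIntegral.integral_of_le hδ]
  have h2 : ∀ x : ℝ, x ^ (2:ℝ) = x ^ 2 := fun x => by
    rw [show (2:ℝ) = ((2:ℕ):ℝ) by norm_num, Real.rpow_natCast]
  simp only [h2, Real.sqrt_eq_rpow] at H ⊢
  exact H

theorem stmt_1 (a δ : ℝ) (ha : 0 < a) (hδ : 0 < δ) (hδa : δ ≤ a)
    (u u' : ℝ → ℂ)
    (hu : ∀ x ∈ Set.Icc (0:ℝ) a, HasDerivWithinAt u (u' x) (Set.Icc (0:ℝ) a) x)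
    (hu' : ContinuousOn u' (Set.Icc (0:ℝ) a)) :
    δ * ‖u 0‖^2 ≤ (∫ x in (0:ℝ)..δ, ‖u x‖^2)
      + 2 * δ * Real.sqrt (∫ x in (0:ℝ)..δ, ‖u x‖^2)
            * Real.sqrt (∫ x in (0:ℝ)..δ, ‖u' x‖^2) := by
  have hsub : Set.Icc (0:ℝ) δ ⊆ Set.Icc 0 a := Set.Icc_subset_Icc_right hδa
  have hcu : ContinuousOn u (Set.Icc 0 a) := fun x hx => (hu x hx).continuousWithinAt
  set φ : ℝ → ℝ := fun x => 2 * (inner ℝ (u x) (u' x) : ℝ) with hφdef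
  have hφc : ContinuousOn φ (Set.Icc 0 a) :=
    continuous_const.continuousOn.mul (hcu.inner hu')
  set B : ℝ → ℝ := fun t => 2 * (‖u t‖ * ‖u' t‖) with hBdef
  have hφb : ∀ x, |φ x| ≤ B x := fun x => by
    simp only [hφdef, hBdef, abs_mul, abs_two]
    exact mul_le_mul_of_nonneg_left (abs_real_inner_le_norm _ _) two_pos.le
  have hBc : ContinuousOn B (Set.Icc 0 a) :=
    continuous_const.continuousOn.mul (hcu.norm.mul hu'.norm)
  have hB0 : ∀ t, 0 ≤ B t := fun t => by positivity
  -- FTC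
  have key : ∀ x ∈ Set.Icc (0:ℝ) δ, (∫ t in (0:ℝ)..x, φ t) = ‖u x‖^2 - ‖u 0‖^2 := by
    intro x hx
    have hxa : Set.Icc (0:ℝ) x ⊆ Set.Icc 0 a := Set.Icc_subset_Icc_right (hx.2.trans hδa)
    apply intervalIntegral.integral_eq_sub_of_hasDeriv_right_of_le hx.1
    · exact ((hcu.mono hxa).norm.pow 2)
    · intro t ht
      have hta : Set.Icc (0:ℝ) a ∈ nhds t :=
        Icc_mem_nhds ht.1 (lt_of_lt_of_le ht.2 (hx.2.trans hδa))
      have := (hu t (hxa ⟨ht.1.le, ht.2.le⟩)).norm_sq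
      exact ((this.hasDerivAt hta)).hasDerivWithinAt
    · rw [intervalIntegrable_iff_integrableOn_Icc_of_le hx.1]
      exact (hφc.mono hxa).integrableOn_compact isCompact_Icc
  set K : ℝ := ∫ t in (0:ℝ)..δ, B t with hK
  have hBint : ∀ x ∈ Set.Icc (0:ℝ) δ, IntervalIntegrable B volume 0 x := fun x hx => by
    rw [intervalIntegrable_iff_integrableOn_Icc_of_le hx.1]
    exact (hBc.mono ((Set.Icc_subset_Icc_right hx.2).trans hsub)).integrableOn_compact isCompact_Icc
  have hφint : ∀ x ∈ Set.Icc (0:ℝ) δ, IntervalIntegrable φ volume 0 x := fun x hx => by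
    rw [intervalIntegrable_iff_integrableOn_Icc_of_le hx.1]
    exact (hφc.mono ((Set.Icc_subset_Icc_right hx.2).trans hsub)).integrableOn_compact isCompact_Icc
  -- pointwise bound
  have hpt : ∀ x ∈ Set.Icc (0:ℝ) δ, ‖u 0‖^2 ≤ ‖u x‖^2 + K := by
    intro x hx
    have h1 : |∫ t in (0:ℝ)..x, φ t| ≤ ∫ t in (0:ℝ)..x, |φ t| :=
      intervalIntegral.abs_integral_le_integral_abs hx.1
    have h2 : (∫ t in (0:ℝ)..x, |φ t|) ≤ ∫ t in (0:ℝ)..x, B t := by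
      apply intervalIntegral.integral_mono_on hx.1 ((hφint x hx).abs) (hBint x hx)
      exact fun t _ => hφb t
    have h3 : (∫ t in (0:ℝ)..x, B t) ≤ K := by
      apply intervalIntegral.integral_mono_interval le_rfl hx.1 hx.2 ?_
        (hBint δ ⟨hδ.le, le_rfl⟩)
      exact Filter.Eventually.of_forall fun t => hB0 t
    have := key x hx
    nlinarith [abs_nonneg (∫ t in (0:ℝ)..x, φ t), neg_abs_le (∫ t in (0:ℝ)..x, φ t)]
  -- integrate the pointwise bound
  have hu2int : IntervalIntegrable (fun x => ‖u x‖^2 + K) volume 0 δ := by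
    rw [intervalIntegrable_iff_integrableOn_Icc_of_le hδ.le]
    exact (((hcu.mono hsub).norm.pow 2).add continuousOn_const).integrableOn_compact isCompact_Icc
  have hint2 : IntervalIntegrable (fun x => ‖u x‖^2) volume 0 δ := by
    rw [intervalIntegrable_iff_integrableOn_Icc_of_le hδ.le]
    exact ((hcu.mono hsub).norm.pow 2).integrableOn_compact isCompact_Icc
  have hmain : δ * ‖u 0‖^2 ≤ (∫ x in (0:ℝ)..δ, ‖u x‖^2) + δ * K := by
    have := intervalIntegral.integral_mono_on hδ.le intervalIntegrable_const hu2int hpt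
    rw [intervalIntegral.integral_const, intervalIntegral.integral_add hint2
      intervalIntegrable_const, intervalIntegral.integral_const] at this
    simp only [smul_eq_mul, sub_zero] at this
    linarith [this]
  -- Cauchy–Schwarz on K
  have hcs : K ≤ 2 * (Real.sqrt (∫ x in (0:ℝ)..δ, ‖u x‖^2) *
      Real.sqrt (∫ x in (0:ℝ)..δ, ‖u' x‖^2)) := by
    have : K = 2 * ∫ t in (0:ℝ)..δ, ‖u t‖ * ‖u' t‖ := by
      rw [hK, hBdef, ← intervalIntegral.integral_const_mul]
    rw [this]
    have := cs_aux δ hδ.le (fun t => ‖u t‖) (fun t => ‖u' t‖)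
      ((hcu.mono hsub).norm) ((hu'.mono hsub).norm)
      (fun t => norm_nonneg _) (fun t => norm_nonneg _)
    linarith
  have hδK : δ * K ≤ δ * (2 * (Real.sqrt (∫ x in (0:ℝ)..δ, ‖u x‖^2) *
      Real.sqrt (∫ x in (0:ℝ)..δ, ‖u' x‖^2))) := mul_le_mul_of_nonneg_left hcs hδ.le
  calc δ * ‖u 0‖^2 ≤ (∫ x in (0:ℝ)..δ, ‖u x‖^2) + δ * K := hmain
    _ ≤ _ := by linarith [hδK]
end

section
/- Under the hypotheses d₁ d₂ < 0 and M₁₂ ≠ 0, the maximum of λ₋ over ℝ is strictly less than the minimum of λ₊ over ℝ; more precisely min_t λ₊(t) - max_t λ₋(t) = (2|M₁₂|/|d₁-d₂|)·√((d₁-d₂)² - (d₁+d₂)²) > 0. -/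
open Real

theorem stmt_6 (M₁₁ M₂₂ d₁ d₂ : ℝ) (M₁₂ : ℂ) (hM : M₁₂ ≠ 0) (hd : d₁ * d₂ < 0) :
    let lp : ℝ → ℝ := fun t => (M₁₁+M₂₂)/2 - t*(d₁+d₂)
      + Real.sqrt (((M₁₁-M₂₂)/2 - t*(d₁-d₂))^2 + ‖M₁₂‖^2)
    let lm : ℝ → ℝ := fun t => (M₁₁+M₂₂)/2 - t*(d₁+d₂)
      - Real.sqrt (((M₁₁-M₂₂)/2 - t*(d₁-d₂))^2 + ‖M₁₂‖^2)
    ∃ tp tm : ℝ, (∀ t : ℝ, lp tp ≤ lp t) ∧ (∀ t : ℝ, lm t ≤ lm tm) ∧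
      lm tm < lp tp ∧
      lp tp - lm tm = (2*‖M₁₂‖/|d₁-d₂|) * Real.sqrt ((d₁-d₂)^2 - (d₁+d₂)^2) ∧
      0 < (2*‖M₁₂‖/|d₁-d₂|) * Real.sqrt ((d₁-d₂)^2 - (d₁+d₂)^2) := by
  intro lp lm
  set s := d₁ + d₂ with hs_def
  set r := d₁ - d₂ with hr_def
  set A := (M₁₁+M₂₂)/2 with hA_def
  set B := (M₁₁-M₂₂)/2 with hB_def
  set m := ‖M₁₂‖ with hm_def
  have hm : 0 < m := norm_pos_iff.mpr hM
  have hrs : s^2 < r^2 := by rw [hs_def, hr_def]; nlinarith [hd]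
  have hr : r ≠ 0 := by
    intro h; rw [h] at hrs; nlinarith [sq_nonneg s]
  set D := Real.sqrt (r^2 - s^2) with hD_def
  have hD : 0 < D := Real.sqrt_pos.mpr (by linarith)
  have hD2 : D^2 = r^2 - s^2 := Real.sq_sqrt (by linarith)
  have hrabs : 0 < |r| := abs_pos.mpr hr
  set k := D / |r| with hk_def
  set c := s / r with hc_def
  have hk : 0 < k := div_pos hD hrabs
  have hck : c^2 + k^2 = 1 := by
    rw [hc_def, hk_def, div_pow, div_pow, sq_abs, hD2]
    field_simp
    ring
  have hlp0 : ∀ t : ℝ, lp t = A - t*s + Real.sqrt ((B - t*r)^2 + m^2) := fun t => rfl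
  have hlm0 : ∀ t : ℝ, lm t = A - t*s - Real.sqrt ((B - t*r)^2 + m^2) := fun t => rfl
  clear_value s r A B m D k c
  -- key minimization lemma
  have key : ∀ c' : ℝ, c'^2 + k^2 = 1 → ∀ u : ℝ,
      k*m ≤ c'*u + Real.sqrt (u^2 + m^2) := by
    intro c' hc' u
    have hnn := Real.sqrt_nonneg (u^2 + m^2)
    have hsq := Real.sq_sqrt (show (0:ℝ) ≤ u^2 + m^2 by positivity)
    nlinarith [sq_nonneg (k*u + c'*m), sq_nonneg (Real.sqrt (u^2+m^2) + k*m - c'*u),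
      mul_pos hk hm]
  have keyeq : ∀ c' : ℝ, c'^2 + k^2 = 1 →
      c'*(-c'*m/k) + Real.sqrt ((-c'*m/k)^2 + m^2) = k*m := by
    intro c' hc'
    have hk0 : k ≠ 0 := ne_of_gt hk
    have h1 : (-c'*m/k)^2 + m^2 = (m/k)^2 := by
      field_simp
      linear_combination hc'
    rw [h1, Real.sqrt_sq (le_of_lt (div_pos hm hk))]
    field_simp
    linear_combination -hc'
  -- rewriting lp and lm
  have hlp : ∀ t : ℝ, lp t = (A - s*B/r) + (c*(B - t*r) + Real.sqrt ((B - t*r)^2 + m^2)) := by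
    intro t
    rw [hlp0, hc_def]
    have : A - t*s = (A - s*B/r) + (s/r)*(B - t*r) := by field_simp; ring
    rw [this]; ring
  have hlm : ∀ t : ℝ, lm t = (A - s*B/r) - ((-c)*(B - t*r) + Real.sqrt ((B - t*r)^2 + m^2)) := by
    intro t
    rw [hlm0, hc_def]
    have : A - t*s = (A - s*B/r) + (s/r)*(B - t*r) := by field_simp; ring
    rw [this]; ring
  have hc' : (-c)^2 + k^2 = 1 := by rw [neg_pow]; simpa using hck
  set up := -c*m/k with hup_def
  set um := -(-c)*m/k with hum_def
  have h1 : B - (B - up)/r * r = up := by field_simp; ring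
  have h2 : B - (B - um)/r * r = um := by field_simp; ring
  have hvp : lp ((B - up)/r) = (A - s*B/r) + k*m := by
    rw [hlp, h1, hup_def, keyeq c hck]
  have hvm : lm ((B - um)/r) = (A - s*B/r) - k*m := by
    rw [hlm, h2, hum_def, keyeq (-c) hc']
  have hkm : 0 < k*m := mul_pos hk hm
  refine ⟨(B - up)/r, (B - um)/r, ?_, ?_, ?_, ?_, ?_⟩
  · intro t
    rw [hvp, hlp t]
    exact add_le_add_right (key c hck _) _
  · intro t
    rw [hvm, hlm t]
    exact sub_le_sub_left (key (-c) hc' _) _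
  · rw [hvp, hvm]; linarith
  · rw [hvp, hvm, hk_def]
    field_simp
    ring
  · exact mul_pos (div_pos (by linarith) hrabs) hD
end
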